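/- Let P be a topological property that is closed hereditary and preserved under finite closed sums, and let Q be a topological property that is closed hereditary and implies complete regularity. If X is a locally-P space that does not have P and has Q, then there exists a completely regular one-point extension Y = X ∪ {p} of X (with p ∉ X) such that for every open neighborhood V of p in Y, the set Y \ V has both P and Q. -/

import Mathlib

universe u

/-- A topological property: a predicate on topological spaces invariant under homeomorphism. -/
def TopInvariant (P : ∀ (X : Type u) [TopologicalSpace X], Prop) : Prop :=
  ∀ (X Y : Type u) [TopologicalSpace X] [TopologicalSpace Y], X ≃ₜ Y → P X → P Y

/-- `P` is closed hereditary: any closed subspace of a space with `P` also has `P`. -/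
def ClosedHereditary (P : ∀ (X : Type u) [TopologicalSpace X], Prop) : Prop :=
  ∀ (X : Type u) [TopologicalSpace X] (s : Set X), IsClosed s → P X → P s

/-- `P` is preserved under finite closed sums: any space which is a finite union of closed
subspaces each having `P` also has `P`. -/
def PreservedFiniteClosedSums (P : ∀ (X : Type u) [TopologicalSpace X], Prop) : Prop :=
  ∀ (X : Type u) [TopologicalSpace X] (n : ℕ) (F : Fin n → Set X),
    (∀ i, IsClosed (F i)) → (∀ i, P (F i)) → (⋃ i, F i) = Set.univ → P X

open Set Topology unitInterval

section Aux

variable {P : ∀ (X : Type u) [TopologicalSpace X], Prop}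

/-- Transfer `P` along an embedding onto its range. -/
lemma topInvariant_range (hPinv : TopInvariant P) {A B : Type u} [TopologicalSpace A]
    [TopologicalSpace B] {e : A → B} (he : Topology.IsEmbedding e) {s : Set B}
    (hs : Set.range e = s) (h : P A) : P ↥s := by
  subst hs
  exact hPinv A _ he.toHomeomorph h

/-- Every empty space has `P`. -/
lemma prop_of_isEmpty (hPsum : PreservedFiniteClosedSums P) (Z : Type u) [TopologicalSpace Z]
    (hZ : IsEmpty Z) : P Z := by
  refine hPsum Z 0 Fin.elim0 (fun i => i.elim0) (fun i => i.elim0) ?_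
  have : (Set.univ : Set Z) = ∅ := Set.univ_eq_empty_iff.2 hZ
  simp [this]

/-- A closed subset of a subset with `P` has `P`. -/
lemma prop_closed_subset (hPinv : TopInvariant P) (hPch : ClosedHereditary P)
    {X : Type u} [TopologicalSpace X] {s t : Set X}
    (hst : s ⊆ t) (hs : IsClosed s) (ht : P ↥t) : P ↥s := by
  have h1 : P ↥((Subtype.val : ↥t → X) ⁻¹' s) :=
    hPch ↥t _ (hs.preimage continuous_subtype_val) ht
  refine topInvariant_range hPinv
    (Topology.IsEmbedding.subtypeVal.comp Topology.IsEmbedding.subtypeVal) ?_ h1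
  rw [Set.range_comp, Subtype.range_val, Subtype.image_preimage_coe]
  exact Set.inter_eq_self_of_subset_right hst

/-- The union of two closed subsets with `P` has `P`. -/
lemma prop_union2 (hPinv : TopInvariant P) (hPsum : PreservedFiniteClosedSums P)
    {X : Type u} [TopologicalSpace X] {A B : Set X}
    (hA : IsClosed A) (hB : IsClosed B) (hPA : P ↥A) (hPB : P ↥B) : P ↥(A ∪ B) := by
  refine hPsum ↥(A ∪ B) 2
    ![(Subtype.val : ↥(A ∪ B) → X) ⁻¹' A, (Subtype.val : ↥(A ∪ B) → X) ⁻¹' B] ?_ ?_ ?_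
  · intro i
    fin_cases i
    · exact hA.preimage continuous_subtype_val
    · exact hB.preimage continuous_subtype_val
  · intro i
    fin_cases i
    · exact topInvariant_range hPinv (Topology.IsEmbedding.inclusion Set.subset_union_left)
        (Set.range_inclusion _) hPA
    · exact topInvariant_range hPinv (Topology.IsEmbedding.inclusion Set.subset_union_right)
        (Set.range_inclusion _) hPB
  · ext a
    simp only [Set.mem_iUnion, Set.mem_univ, iff_true]
    rcases a.2 with h | h
    · exact ⟨0, h⟩
    · exact ⟨1, h⟩

/-- The one-point extension topology on `Option X` determined by a family `𝓕` of functions: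
a set is open iff its trace on `X` is open and, if it contains the extra point `none`,
it contains a "tail set" `{f > t}` for some `f ∈ 𝓕`, `t < 1`. -/
def extTop {X : Type u} [TopologicalSpace X] (𝓕 : Set (X → ℝ))
    (hcont : ∀ f ∈ 𝓕, Continuous f)
    (hone : (fun _ : X => (1 : ℝ)) ∈ 𝓕)
    (hmin : ∀ f ∈ 𝓕, ∀ g ∈ 𝓕, (fun x => min (f x) (g x)) ∈ 𝓕) :
    TopologicalSpace (Option X) where
  IsOpen W := IsOpen (some ⁻¹' W) ∧
    (none ∈ W → ∃ f ∈ 𝓕, ∃ t : ℝ, t < 1 ∧ ∀ x, t < f x → some x ∈ W)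
  isOpen_univ := ⟨isOpen_univ, fun _ => ⟨_, hone, 0, zero_lt_one, fun _ _ => Set.mem_univ _⟩⟩
  isOpen_inter := by
    rintro U V ⟨hU1, hU2⟩ ⟨hV1, hV2⟩
    refine ⟨hU1.inter hV1, fun hn => ?_⟩
    obtain ⟨f, hf, t, ht, hfU⟩ := hU2 hn.1
    obtain ⟨g, hg, s, hs, hgV⟩ := hV2 hn.2
    refine ⟨_, hmin f hf g hg, max t s, max_lt ht hs, fun x hx => ?_⟩
    exact ⟨hfU x (lt_of_le_of_lt (le_max_left _ _) (lt_of_lt_of_le hx (min_le_left _ _))),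
      hgV x (lt_of_le_of_lt (le_max_right _ _) (lt_of_lt_of_le hx (min_le_right _ _)))⟩
  isOpen_sUnion := by
    intro S hS
    constructor
    · rw [Set.preimage_sUnion]
      exact isOpen_biUnion fun W hW => (hS W hW).1
    · rintro ⟨W, hWS, hnW⟩
      obtain ⟨f, hf, t, ht, hfW⟩ := (hS W hWS).2 hnW
      exact ⟨f, hf, t, ht, fun x hx => Set.mem_sUnion.2 ⟨W, hWS, hfW x hx⟩⟩

end Aux

theorem one_point_extension_neighborhood_complements
    (P Q : ∀ (X : Type u) [TopologicalSpace X], Prop)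
    (hPinv : TopInvariant P) (hQinv : TopInvariant Q)
    (hPch : ClosedHereditary P) (hPsum : PreservedFiniteClosedSums P)
    (hQch : ClosedHereditary Q)
    (hQcr : ∀ (Z : Type u) [TopologicalSpace Z], Q Z → CompletelyRegularSpace Z)
    (X : Type u) [TopologicalSpace X]
    (hloc : ∀ x : X, ∃ N ∈ nhds x, P ↥N)
    (hnP : ¬ P X) (hQ : Q X) :
    ∃ (Y : Type u) (_ : TopologicalSpace Y) (e : X → Y) (p : Y),
      Topology.IsEmbedding e ∧ Dense (Set.range e) ∧ (Set.range e)ᶜ = {p} ∧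
      CompletelyRegularSpace Y ∧
      ∀ V : Set Y, IsOpen V → p ∈ V → P ↥(Vᶜ : Set Y) ∧ Q ↥(Vᶜ : Set Y) := by
  classical
  haveI hXcr : CompletelyRegularSpace X := hQcr X hQ
  -- the family of "test functions" for neighborhoods of the new point
  set 𝓕 : Set (X → ℝ) :=
    {f | Continuous f ∧ (∀ x, f x ≤ 1) ∧ ∀ t : ℝ, t < 1 → P ↥{x | f x ≤ t}} with h𝓕
  have hcont𝓕 : ∀ f ∈ 𝓕, Continuous f := fun f hf => hf.1
  have hle𝓕 : ∀ f ∈ 𝓕, ∀ x, f x ≤ 1 := fun f hf => hf.2.1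
  have hP𝓕 : ∀ f ∈ 𝓕, ∀ t : ℝ, t < 1 → P ↥{x | f x ≤ t} := fun f hf => hf.2.2
  have hone : (fun _ : X => (1 : ℝ)) ∈ 𝓕 := by
    refine ⟨continuous_const, fun _ => le_refl _, fun t ht => ?_⟩
    have he : {x : X | (1 : ℝ) ≤ t} = ∅ := by
      ext x; simp only [Set.mem_setOf_eq, Set.mem_empty_iff_false, iff_false, not_le]; exact ht
    rw [he]
    exact prop_of_isEmpty hPsum _ (by simp)
  have hmin : ∀ f ∈ 𝓕, ∀ g ∈ 𝓕, (fun x => min (f x) (g x)) ∈ 𝓕 := by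
    intro f hf g hg
    refine ⟨hf.1.min hg.1, fun x => min_le_of_left_le (hf.2.1 x), fun t ht => ?_⟩
    have he : {x : X | min (f x) (g x) ≤ t} = {x | f x ≤ t} ∪ {x | g x ≤ t} := by
      ext x; simp [min_le_iff, Set.mem_union]
    rw [he]
    exact prop_union2 hPinv hPsum (isClosed_le hf.1 continuous_const)
      (isClosed_le hg.1 continuous_const) (hf.2.2 t ht) (hg.2.2 t ht)
  -- closed P-neighborhoods with bump functions
  have hnb : ∀ x0 : X, ∃ (C : Set X) (h : X → ℝ), IsClosed C ∧ P ↥C ∧ Q ↥C ∧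
      Continuous h ∧ h x0 = 1 ∧ (∀ y, 0 ≤ h y) ∧ (∀ y, h y ≤ 1) ∧
      (∀ y, y ∉ interior C → h y = 0) ∧ x0 ∈ C ∧ (fun y => 1 - h y) ∈ 𝓕 := by
    intro x0
    obtain ⟨N, hN, hPN⟩ := hloc x0
    have hx0U : x0 ∈ interior N := mem_interior_iff_mem_nhds.2 hN
    obtain ⟨f, cf, fx0, fK⟩ := CompletelyRegularSpace.completely_regular x0 (interior N)ᶜ
      isOpen_interior.isClosed_compl (by simpa using hx0U)
    set F : X → ℝ := fun y => (f y : ℝ) with hF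
    have cF : Continuous F := continuous_subtype_val.comp cf
    have hF0 : ∀ y, 0 ≤ F y := fun y => (f y).2.1
    have hF1 : ∀ y, F y ≤ 1 := fun y => (f y).2.2
    have hFx0 : F x0 = 0 := by simp [hF, fx0]
    have hFK : ∀ y, y ∉ interior N → F y = 1 := by
      intro y hy
      have := fK (Set.mem_compl hy)
      simp only [Pi.one_apply] at this
      simp [hF, this]
    set C : Set X := {y | F y ≤ 1 / 2} with hC
    have hCcl : IsClosed C := isClosed_le cF continuous_const
    have hCN : C ⊆ N := by
      intro y hy
      by_contra hyN
      have : y ∉ interior N := fun h => hyN (interior_subset h)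
      have h1 := hFK y this
      have h2 : F y ≤ 1 / 2 := hy
      rw [h1] at h2
      norm_num at h2
    have hPC : P ↥C := prop_closed_subset hPinv hPch hCN hCcl hPN
    have hQC : Q ↥C := hQch X C hCcl hQ
    set h : X → ℝ := fun y => max 0 (1 - 2 * F y) with hh
    have hhc : Continuous h := continuous_const.max (continuous_const.sub (continuous_const.mul cF))
    have hhx0 : h x0 = 1 := by simp [hh, hFx0]
    have hh0 : ∀ y, 0 ≤ h y := fun y => le_max_left _ _
    have hh1 : ∀ y, h y ≤ 1 := by
      intro y
      refine max_le (by norm_num) ?_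
      have := hF0 y; linarith
    have hsubint : {y : X | F y < 1 / 2} ⊆ interior C := by
      refine interior_maximal ?_ (isOpen_lt cF continuous_const)
      intro y hy
      simp only [Set.mem_setOf_eq] at hy
      show F y ≤ 1 / 2
      exact le_of_lt hy
    have hout : ∀ y, y ∉ interior C → h y = 0 := by
      intro y hy
      have : ¬ F y < 1 / 2 := fun hlt => hy (hsubint hlt)
      push_neg at this
      have : 1 - 2 * F y ≤ 0 := by linarith
      simp [hh, max_eq_left this]
    have hx0C : x0 ∈ C := by show F x0 ≤ 1 / 2; rw [hFx0]; norm_num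
    refine ⟨C, h, hCcl, hPC, hQC, hhc, hhx0, hh0, hh1, hout, hx0C, ?_⟩
    refine ⟨continuous_const.sub hhc, fun x => by simp only; linarith [hh0 x], fun t ht => ?_⟩
    have hsub : {y : X | 1 - h y ≤ t} ⊆ C := by
      intro y hy
      simp only [Set.mem_setOf_eq] at hy
      have hpos : 0 < h y := by linarith
      have h2 : 0 < 1 - 2 * F y := by
        by_contra hle
        push_neg at hle
        have hz : h y = 0 := max_eq_left hle
        linarith
      have : F y < 1 / 2 := by linarith
      exact le_of_lt this
    exact prop_closed_subset hPinv hPch hsub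
      (isClosed_le (continuous_const.sub hhc) continuous_const) hPC
  -- the extension space
  letI T : TopologicalSpace (Option X) := extTop 𝓕 hcont𝓕 hone hmin
  have hopen : ∀ W : Set (Option X), IsOpen W ↔ (IsOpen (some ⁻¹' W) ∧
      (none ∈ W → ∃ f ∈ 𝓕, ∃ t : ℝ, t < 1 ∧ ∀ x, t < f x → some x ∈ W)) :=
    fun W => Iff.rfl
  -- `some` is an embedding
  have hemb : Topology.IsEmbedding (some : X → Option X) := by
    refine ⟨⟨TopologicalSpace.ext_iff.2 fun s => ?_⟩, Option.some_injective X⟩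
    rw [isOpen_induced_iff]
    constructor
    · intro hs
      refine ⟨some '' s, ⟨?_, fun hn => absurd hn ?_⟩, Set.preimage_image_eq _ (Option.some_injective X)⟩
      · rw [Set.preimage_image_eq _ (Option.some_injective X)]; exact hs
      · simp
    · rintro ⟨W, hW, rfl⟩
      exact hW.1
  have hopenemb : Topology.IsOpenEmbedding (some : X → Option X) := by
    refine ⟨hemb, ?_⟩
    rw [hopen]
    constructor
    · have : some ⁻¹' (Set.range (some : X → Option X)) = Set.univ := by
        ext x; simp
      rw [this]; exact isOpen_univ
    · intro hn
      exact absurd hn (by simp)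
  -- neighborhoods of `none`
  have hnhds_none : ∀ s : Set (Option X), none ∈ s →
      (∃ f ∈ 𝓕, ∃ t : ℝ, t < 1 ∧ ∀ x, t < f x → some x ∈ s) → s ∈ nhds none := by
    rintro s hns ⟨f, hf, t, ht, hfs⟩
    refine mem_nhds_iff.2 ⟨insert none (some '' {x | t < f x}), ?_, ?_, Set.mem_insert _ _⟩
    · rintro y (rfl | ⟨x, hx, rfl⟩)
      · exact hns
      · exact hfs x hx
    · rw [hopen]
      constructor
      · have : some ⁻¹' (insert none (some '' {x | t < f x})) = {x | t < f x} := by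
          ext x
          simp [Option.some_injective X |>.mem_set_image]
        rw [this]
        exact isOpen_lt continuous_const (hcont𝓕 f hf)
      · intro _
        exact ⟨f, hf, t, ht, fun x hx => Set.mem_insert_iff.2 (Or.inr ⟨x, hx, rfl⟩)⟩
  -- continuity of extensions by a value at `none`
  have hext_cont : ∀ (φ : X → ℝ) (c : ℝ), Continuous φ →
      (∀ ε : ℝ, 0 < ε → ∃ f ∈ 𝓕, ∃ t : ℝ, t < 1 ∧ ∀ x, t < f x → |φ x - c| < ε) →
      Continuous (fun y : Option X => y.elim c φ) := by
    intro φ c hφ hsmall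
    rw [continuous_iff_continuousAt]
    intro y
    match y with
    | Option.some x =>
      rw [← hopenemb.continuousAt_iff]
      exact hφ.continuousAt
    | none =>
      rw [ContinuousAt]
      simp only [Option.elim]
      rw [Metric.tendsto_nhds]
      intro ε hε
      rw [Filter.eventually_iff]
      have hns : none ∈ {y : Option X | dist (y.elim c φ) c < ε} := by
        simp [hε]
      refine hnhds_none _ hns ?_
      obtain ⟨f, hf, t, ht, hfs⟩ := hsmall ε hε
      refine ⟨f, hf, t, ht, fun x hx => ?_⟩
      simp only [Set.mem_setOf_eq, Option.elim, Real.dist_eq]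
      exact hfs x hx
  -- conclude
  refine ⟨Option X, T, some, none, hemb, ?_, ?_, ?_, ?_⟩
  · -- dense
    rw [dense_iff_inter_open]
    intro U hU hUne
    by_contra hcon
    rw [Set.not_nonempty_iff_eq_empty] at hcon
    have hnosome : ∀ x : X, some x ∉ U := by
      intro x hx
      exact absurd hcon (Set.nonempty_iff_ne_empty.1 ⟨some x, hx, Set.mem_range_self x⟩)
    have hnone : none ∈ U := by
      obtain ⟨y, hy⟩ := hUne
      match y with
      | Option.some x => exact absurd hy (hnosome x)
      | none => exact hy
    obtain ⟨f, hf, t, ht, hfU⟩ := (hopen U |>.1 hU).2 hnone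
    have hall : {x : X | f x ≤ t} = Set.univ := by
      ext x
      simp only [Set.mem_setOf_eq, Set.mem_univ, iff_true]
      by_contra hlt
      push_neg at hlt
      exact hnosome x (hfU x hlt)
    have hPuniv : P ↥(Set.univ : Set X) := hall ▸ hP𝓕 f hf t ht
    exact hnP (hPinv _ _ (Homeomorph.Set.univ X) hPuniv)
  · -- complement of range
    ext y
    match y with
    | Option.some x => simp
    | none => simp
  · -- completely regular
    refine ⟨fun y K hK hyK => ?_⟩
    have hKo : IsOpen (some ⁻¹' Kᶜ) ∧ (none ∈ Kᶜ → ∃ f ∈ 𝓕, ∃ t : ℝ, t < 1 ∧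
        ∀ x, t < f x → some x ∈ Kᶜ) := (hopen Kᶜ).1 hK.isOpen_compl
    have hKX : IsClosed (some ⁻¹' K) := by
      rw [← isOpen_compl_iff, ← Set.preimage_compl]
      exact hKo.1
    match y with
    | none =>
      obtain ⟨f, hf, t, ht, hfK⟩ := hKo.2 (Set.mem_compl hyK)
      have htpos : 0 < 1 - t := by linarith
      set ρ : Option X → ℝ := fun y => y.elim 0 (fun x => (1 - f x) / (1 - t)) with hρ
      have hρc : Continuous ρ := by
        refine hext_cont _ _ ((continuous_const.sub (hcont𝓕 f hf)).div_const _) ?_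
        intro ε hε
        refine ⟨f, hf, max t (1 - ε * (1 - t)), max_lt ht (by nlinarith), fun x hx => ?_⟩
        have h1 : 1 - ε * (1 - t) < f x := lt_of_le_of_lt (le_max_right _ _) hx
        have h2 : f x ≤ 1 := hle𝓕 f hf x
        have hnum : 0 ≤ 1 - f x := by linarith
        rw [sub_zero, abs_of_nonneg (div_nonneg hnum (le_of_lt htpos))]
        rw [div_lt_iff₀ htpos]
        nlinarith
      refine ⟨fun y => Set.projIcc 0 1 zero_le_one (ρ y),
        continuous_projIcc.comp hρc, ?_, ?_⟩
      · show Set.projIcc 0 1 zero_le_one (ρ none) = 0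
        have : ρ none = 0 := rfl
        rw [this, Set.projIcc_of_le_left _ le_rfl]
        rfl
      · intro y hy
        match y with
        | none => exact absurd hy hyK
        | Option.some x =>
          have hfx : f x ≤ t := by
            by_contra hlt
            push_neg at hlt
            exact (hfK x hlt) hy
          have : (1 : ℝ) ≤ ρ (some x) := by
            show (1 : ℝ) ≤ (1 - f x) / (1 - t)
            rw [le_div_iff₀ htpos]
            linarith
          show Set.projIcc 0 1 zero_le_one (ρ (some x)) = 1
          rw [Set.projIcc_of_right_le _ this]
          rfl
    | Option.some x0 =>
      obtain ⟨C, h, hCcl, hPC, hQC, hhc, hhx0, hh0, hh1, hout, hx0C, h1h⟩ := hnb x0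
      haveI : CompletelyRegularSpace ↥C := hQcr _ hQC
      have hK'cl : IsClosed ((Subtype.val : ↥C → X) ⁻¹' (some ⁻¹' K)) :=
        hKX.preimage continuous_subtype_val
      obtain ⟨g, gc, gx0, gK⟩ := CompletelyRegularSpace.completely_regular
        (⟨x0, hx0C⟩ : ↥C) _ hK'cl (by simpa using hyK)
      set gt : X → ℝ := fun y => if hy : y ∈ C then 1 - (g ⟨y, hy⟩ : ℝ) else 0 with hgt
      have hgt0 : ∀ y, 0 ≤ gt y := by
        intro y
        by_cases hy : y ∈ C
        · simp only [hgt, dif_pos hy]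
          linarith [(g ⟨y, hy⟩).2.2]
        · simp [hgt, dif_neg hy]
      have hgt1 : ∀ y, gt y ≤ 1 := by
        intro y
        by_cases hy : y ∈ C
        · simp only [hgt, dif_pos hy]
          linarith [(g ⟨y, hy⟩).2.1]
        · simp [hgt, dif_neg hy]
      have hgtx0 : gt x0 = 1 := by
        simp only [hgt, dif_pos hx0C]
        have : g ⟨x0, hx0C⟩ = 0 := gx0
        rw [this]
        norm_num
      have hgtK : ∀ x, some x ∈ K → gt x = 0 := by
        intro x hx
        by_cases hxC : x ∈ C
        · simp only [hgt, dif_pos hxC]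
          have : g ⟨x, hxC⟩ = 1 := gK (by simpa using hx)
          rw [this]
          norm_num
        · simp [hgt, dif_neg hxC]
      have hgton : ContinuousOn gt C := by
        rw [continuousOn_iff_continuous_restrict]
        have : C.domRestrict gt = fun z => 1 - (g z : ℝ) := by
          funext z
          simp [Set.domRestrict, hgt, dif_pos z.2]
        rw [this]
        exact continuous_const.sub (continuous_subtype_val.comp gc)
      set φ : X → ℝ := fun y => h y * gt y with hφ
      have hφ0 : ∀ y, 0 ≤ φ y := fun y => mul_nonneg (hh0 y) (hgt0 y)
      have hφh : ∀ y, φ y ≤ h y := fun y => mul_le_of_le_one_right (hh0 y) (hgt1 y)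
      have hφc : Continuous φ := by
        rw [continuous_iff_continuousAt]
        intro y
        by_cases hy : y ∈ interior C
        · exact (hhc.continuousAt).mul (hgton.continuousAt (mem_interior_iff_mem_nhds.1 hy))
        · have hφy : φ y = 0 := by rw [hφ]; simp [hout y hy]
          rw [ContinuousAt, hφy]
          refine squeeze_zero hφ0 hφh ?_
          have := hhc.continuousAt (x := y)
          rwa [ContinuousAt, hout y hy] at this
      set Φ : Option X → ℝ := fun y => y.elim 0 φ with hΦ
      have hΦc : Continuous Φ := by
        refine hext_cont _ _ hφc ?_
        intro ε hε
        refine ⟨_, h1h, max 0 (1 - ε), max_lt zero_lt_one (by linarith), fun x hx => ?_⟩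
        have h1 : 1 - ε < 1 - h x := lt_of_le_of_lt (le_max_right _ _) hx
        have h2 : φ x < ε := lt_of_le_of_lt (hφh x) (by linarith)
        rw [sub_zero, abs_of_nonneg (hφ0 x)]
        exact h2
      refine ⟨fun y => Set.projIcc 0 1 zero_le_one (1 - Φ y),
        continuous_projIcc.comp (continuous_const.sub hΦc), ?_, ?_⟩
      · show Set.projIcc 0 1 zero_le_one (1 - Φ (some x0)) = 0
        have : Φ (some x0) = 1 := by
          show φ x0 = 1
          simp only [hφ]
          rw [hhx0, hgtx0]
          norm_num
        rw [this, sub_self, Set.projIcc_of_le_left _ le_rfl]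
        rfl
      · intro y hy
        have hΦy : Φ y = 0 := by
          match y with
          | none => rfl
          | Option.some x =>
            show φ x = 0
            rw [hφ]
            simp [hgtK x hy]
        show Set.projIcc 0 1 zero_le_one (1 - Φ y) = 1
        rw [hΦy, sub_zero, Set.projIcc_of_right_le _ le_rfl]
        rfl
  · -- complements of neighborhoods of the point
    intro V hV hpV
    obtain ⟨f, hf, t, ht, hfV⟩ := ((hopen V).1 hV).2 hpV
    set A : Set X := (some ⁻¹' V)ᶜ with hA
    have hAcl : IsClosed A := (((hopen V).1 hV).1).isClosed_compl
    have hAsub : A ⊆ {x | f x ≤ t} := by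
      intro x hx
      show f x ≤ t
      by_contra hlt
      push_neg at hlt
      exact hx (hfV x hlt)
    have hPA : P ↥A := prop_closed_subset hPinv hPch hAsub hAcl (hP𝓕 f hf t ht)
    have hQA : Q ↥A := hQch X A hAcl hQ
    have hrange : Set.range ((some : X → Option X) ∘ (Subtype.val : ↥A → X)) = Vᶜ := by
      rw [Set.range_comp, Subtype.range_val]
      ext y
      match y with
      | none =>
        simp only [Set.mem_image, Set.mem_compl_iff]
        constructor
        · rintro ⟨x, _, hx⟩; exact (Option.some_ne_none x hx).elim
        · intro hn; exact absurd hpV hn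
      | Option.some x =>
        simp only [Set.mem_image, Set.mem_compl_iff]
        constructor
        · rintro ⟨x', hx', hx⟩
          have : x' = x := Option.some_injective X hx
          subst this
          exact hx'
        · intro hx
          exact ⟨x, hx, rfl⟩
    have hembA : Topology.IsEmbedding ((some : X → Option X) ∘ (Subtype.val : ↥A → X)) :=
      hemb.comp Topology.IsEmbedding.subtypeVal
    exact ⟨topInvariant_range hPinv hembA hrange hPA, topInvariant_range hQinv hembA hrange hQA⟩
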